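/- For the Black–Scholes model, the function S_T(ω) = S₀ exp((r − σ²/2)T + σ√T ω) with ω standard normal satisfies E[e^{−rT}(S_T − P₀)₊] = S₀Φ(−d₁ + σ√T) − P₀ e^{−rT} Φ(−d₁), where d₁ = (log P₀ − log S₀ − (r − σ²/2)T)/(σ√T) and Φ is the standard normal CDF. -/
import Mathlib

open MeasureTheory Real ProbabilityTheory Set
open scoped NNReal ENNReal

noncomputable def stdNormalCDF (x : ℝ) : ℝ :=
  ∫ u in Set.Iic x, (2 * π) ^ (-(1:ℝ)/2) * Real.exp (-u ^ 2 / 2)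

namespace BSAux

noncomputable def phi (u : ℝ) : ℝ := (2 * π) ^ (-(1:ℝ)/2) * Real.exp (-u ^ 2 / 2)

lemma cdf_eq (x : ℝ) : stdNormalCDF x = ∫ u in Set.Iic x, phi u := rfl

lemma phi_eq : phi = gaussianPDFReal 0 1 := by
  ext u
  have h : ((2:ℝ) * π) ^ (-(1:ℝ)/2) = (Real.sqrt (2 * π))⁻¹ := by
    rw [Real.sqrt_eq_rpow, ← Real.rpow_neg (by positivity), neg_div]
  simp only [phi, gaussianPDFReal, NNReal.coe_one, mul_one, sub_zero, h]

lemma phi_integrable : Integrable phi := phi_eq ▸ integrable_gaussianPDFReal 0 1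

lemma phi_total : ∫ u, phi u = 1 := by
  rw [phi_eq]; exact integral_gaussianPDFReal_eq_one 0 one_ne_zero

lemma phi_even (x : ℝ) : phi (-x) = phi x := by simp [phi, neg_sq]

lemma exp_mul_phi (b x : ℝ) :
    Real.exp (b * x) * phi x = Real.exp (b ^ 2 / 2) * phi (x - b) := by
  simp only [phi]
  rw [show Real.exp (b*x) * ((2*π)^(-(1:ℝ)/2) * Real.exp (-x^2/2))
        = (2*π)^(-(1:ℝ)/2) * Real.exp (b*x + -x^2/2) by rw [Real.exp_add]; ring,
      show Real.exp (b^2/2) * ((2*π)^(-(1:ℝ)/2) * Real.exp (-(x-b)^2/2))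
        = (2*π)^(-(1:ℝ)/2) * Real.exp (b^2/2 + -(x-b)^2/2) by rw [Real.exp_add]; ring]
  congr 1
  ring

lemma integral_phi_shift (c b : ℝ) :
    ∫ x in Set.Iic c, phi (x - b) = stdNormalCDF (c - b) := by
  have key : ∀ x, (Set.Iic c).indicator (fun x => phi (x - b)) x
      = (Set.Iic (c - b)).indicator phi (x - b) := by
    intro x
    by_cases hx : x ≤ c
    · rw [Set.indicator_of_mem (by exact hx), Set.indicator_of_mem (by
        simp only [Set.mem_Iic]; linarith)]
    · rw [Set.indicator_of_notMem (by exact hx), Set.indicator_of_notMem (by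
        simp only [Set.mem_Iic]; intro h; exact hx (by linarith))]
  calc ∫ x in Set.Iic c, phi (x - b)
      = ∫ x, (Set.Iic c).indicator (fun x => phi (x - b)) x :=
        (integral_indicator measurableSet_Iic).symm
    _ = ∫ x, (Set.Iic (c - b)).indicator phi (x - b) := by simp only [key]
    _ = ∫ x, (Set.Iic (c - b)).indicator phi x := integral_sub_right_eq_self _ b
    _ = ∫ x in Set.Iic (c - b), phi x := integral_indicator measurableSet_Iic
    _ = stdNormalCDF (c - b) := (cdf_eq _).symm

lemma setIntegral_exp_mul_phi (b c : ℝ) :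
    ∫ x in Set.Iic c, Real.exp (b * x) * phi x
      = Real.exp (b ^ 2 / 2) * stdNormalCDF (c - b) := by
  simp only [exp_mul_phi]
  rw [integral_const_mul, integral_phi_shift]

lemma integral_exp_mul_phi (b : ℝ) :
    ∫ x, Real.exp (b * x) * phi x = Real.exp (b ^ 2 / 2) := by
  simp only [exp_mul_phi]
  rw [integral_const_mul, integral_sub_right_eq_self phi b, phi_total, mul_one]

lemma exp_mul_phi_integrable (b : ℝ) :
    Integrable (fun x => Real.exp (b * x) * phi x) := by
  simp only [exp_mul_phi]
  exact (phi_integrable.comp_sub_right b).const_mul _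

lemma integral_Ici_eq (f : ℝ → ℝ) (hf : Integrable f) (c : ℝ) :
    ∫ x in Set.Ici c, f x = (∫ x, f x) - ∫ x in Set.Iic c, f x := by
  have h := setIntegral_union (f := f) (μ := volume)
    (Set.Iic_disjoint_Ioi (le_refl c)) measurableSet_Ioi hf.integrableOn hf.integrableOn
  rw [Set.Iic_union_Ioi, setIntegral_univ] at h
  have h2 : ∫ x in Set.Ici c, f x = ∫ x in Set.Ioi c, f x :=
    (setIntegral_congr_set Ioi_ae_eq_Ici).symm
  rw [h2]
  linarith

lemma stdNormalCDF_neg (c : ℝ) : stdNormalCDF (-c) = 1 - stdNormalCDF c := by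
  have key : ∀ x, (Set.Iic (-c)).indicator phi x = (Set.Ici c).indicator phi (-x) := by
    intro x
    by_cases hx : x ≤ -c
    · rw [Set.indicator_of_mem (by exact hx), Set.indicator_of_mem (by
        simp only [Set.mem_Ici]; linarith), phi_even]
    · rw [Set.indicator_of_notMem (by exact hx), Set.indicator_of_notMem (by
        simp only [Set.mem_Ici]; intro h; exact hx (by linarith))]
  have h1 : stdNormalCDF (-c) = ∫ x in Set.Ici c, phi x := by
    calc stdNormalCDF (-c) = ∫ x, (Set.Iic (-c)).indicator phi x := by
          rw [cdf_eq, integral_indicator measurableSet_Iic]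
      _ = ∫ x, (Set.Ici c).indicator phi (-x) := by simp only [key]
      _ = ∫ x, (Set.Ici c).indicator phi x := integral_neg_eq_self _ _
      _ = ∫ x in Set.Ici c, phi x := integral_indicator measurableSet_Ici
  rw [h1, integral_Ici_eq phi phi_integrable, phi_total, cdf_eq]

lemma main_calc (S0 P0 A b c D : ℝ) (hS0 : 0 < S0) (hP0 : 0 < P0) (hb : 0 < b)
    (hc : c = (Real.log P0 - Real.log S0 - A) / b) :
    ∫ ω, D * max (S0 * Real.exp (A + b * ω) - P0) 0 ∂(gaussianReal 0 1)
      = D * S0 * Real.exp A * Real.exp (b ^ 2 / 2) * stdNormalCDF (-c + b)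
        - D * P0 * stdNormalCDF (-c) := by
  have nn_meas : Measurable fun x => (gaussianPDFReal 0 1 x).toNNReal :=
    (measurable_gaussianPDFReal 0 1).real_toNNReal
  rw [show gaussianReal 0 1
        = volume.withDensity (fun x => (((gaussianPDFReal 0 1 x).toNNReal : ℝ≥0) : ℝ≥0∞))
      from gaussianReal_of_var_ne_zero 0 one_ne_zero,
    integral_withDensity_eq_integral_smul nn_meas]
  have hpivot : ∀ ω : ℝ, c ≤ ω ↔ P0 ≤ S0 * Real.exp (A + b * ω) := by
    intro ω
    rw [hc, div_le_iff₀ hb, mul_comm S0, ← div_le_iff₀ hS0,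
      ← Real.log_le_iff_le_exp (div_pos hP0 hS0), Real.log_div hP0.ne' hS0.ne']
    constructor <;> intro h <;> linarith
  have hpoint : ∀ ω : ℝ,
      ((gaussianPDFReal 0 1 ω).toNNReal : ℝ≥0) • (D * max (S0 * Real.exp (A + b * ω) - P0) 0)
        = (Set.Ici c).indicator
            (fun ω => D * (S0 * Real.exp (A + b * ω) - P0) * phi ω) ω := by
    intro ω
    rw [NNReal.smul_def, Real.coe_toNNReal _ (gaussianPDFReal_nonneg 0 1 ω), smul_eq_mul, ← phi_eq]
    by_cases hω : c ≤ ω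
    · rw [Set.indicator_of_mem (by exact hω),
        max_eq_left (by have := (hpivot ω).mp hω; linarith)]
      ring
    · rw [Set.indicator_of_notMem (by exact hω),
        max_eq_right (sub_nonpos.mpr (not_le.mp (fun h => hω ((hpivot ω).mpr h))).le)]
      ring
  simp only [hpoint]
  rw [integral_indicator measurableSet_Ici]
  have hsplit : ∀ ω : ℝ, D * (S0 * Real.exp (A + b * ω) - P0) * phi ω
      = (D * S0 * Real.exp A) * (Real.exp (b * ω) * phi ω) - (D * P0) * phi ω := by
    intro ω
    rw [Real.exp_add]
    ring
  simp only [hsplit]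
  rw [integral_sub
      (((exp_mul_phi_integrable b).const_mul (D * S0 * Real.exp A)).integrableOn)
      ((phi_integrable.const_mul (D * P0)).integrableOn),
    integral_const_mul, integral_const_mul,
    integral_Ici_eq _ (exp_mul_phi_integrable b),
    integral_Ici_eq _ phi_integrable,
    integral_exp_mul_phi, setIntegral_exp_mul_phi, phi_total, ← cdf_eq,
    show -c + b = -(c - b) by ring, stdNormalCDF_neg, stdNormalCDF_neg]
  ring

end BSAux

/-- Black–Scholes call option pricing formula: for `ω ~ N(0,1)` and
`S_T = S₀ exp((r − σ²/2)T + σ√T ω)`, the discounted expected payoff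
`E[e^{−rT}(S_T − P₀)₊]` equals `S₀Φ(−d₁ + σ√T) − P₀e^{−rT}Φ(−d₁)`. -/
theorem black_scholes_call_price (S0 r σ T P0 : ℝ)
    (hS0 : 0 < S0) (hσ : 0 < σ) (hT : 0 < T) (hP0 : 0 < P0)
    (d1 : ℝ)
    (hd1 : d1 = (Real.log P0 - Real.log S0 - (r - σ ^ 2 / 2) * T) / (σ * Real.sqrt T)) :
    ∫ ω, Real.exp (-r * T) *
        max (S0 * Real.exp ((r - σ ^ 2 / 2) * T + σ * Real.sqrt T * ω) - P0) 0
        ∂(gaussianReal 0 1)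
      = S0 * stdNormalCDF (-d1 + σ * Real.sqrt T)
        - P0 * Real.exp (-r * T) * stdNormalCDF (-d1) := by
  have hb : 0 < σ * Real.sqrt T := mul_pos hσ (Real.sqrt_pos.mpr hT)
  rw [BSAux.main_calc S0 P0 ((r - σ ^ 2 / 2) * T) (σ * Real.sqrt T) d1
    (Real.exp (-r * T)) hS0 hP0 hb hd1]
  have hb2 : (σ * Real.sqrt T) ^ 2 = σ ^ 2 * T := by
    rw [mul_pow, Real.sq_sqrt hT.le]
  have hexp : Real.exp (-r * T) * Real.exp ((r - σ ^ 2 / 2) * T)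
      * Real.exp ((σ * Real.sqrt T) ^ 2 / 2) = 1 := by
    rw [← Real.exp_add, ← Real.exp_add, hb2,
      show -r * T + (r - σ ^ 2 / 2) * T + σ ^ 2 * T / 2 = 0 by ring, Real.exp_zero]
  linear_combination (stdNormalCDF (-d1 + σ * Real.sqrt T) * S0) * hexp
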